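/- For L odd, the matrix U_G = (1/sqrt(L)) * Σ_{u,v} τ^{β^{-1}(α v^2 - 2uv + δ u^2)} |u><v|, where τ = -exp(iπ/L) and G = ((α,β),(γ,δ)) ∈ SL(2,Z_L) with β invertible mod L, is unitary. -/

import Mathlib

lemma tau_primitive (L : ℕ) [NeZero L] (hodd : Odd L) :
    IsPrimitiveRoot (-Complex.exp (Real.pi * Complex.I / L)) L := by
  have hL : (L : ℕ) ≠ 0 := NeZero.ne L
  have hLC : (L : ℂ) ≠ 0 := Nat.cast_ne_zero.mpr hL
  have h := Complex.isPrimitiveRoot_exp L hL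
  have h2 : 2 * ((L + 1) / 2) = L + 1 := by
    obtain ⟨k, hk⟩ := hodd; omega
  have hm : Nat.Coprime ((L + 1) / 2) L := by
    have hd : Nat.gcd ((L + 1) / 2) L ∣ 1 := by
      have h1 : Nat.gcd ((L + 1) / 2) L ∣ 2 * ((L + 1) / 2) :=
        Dvd.dvd.mul_left (Nat.gcd_dvd_left _ _) 2
      have h2' : Nat.gcd ((L + 1) / 2) L ∣ L := Nat.gcd_dvd_right _ _
      have := Nat.dvd_sub h1 h2'
      rwa [h2, Nat.add_sub_cancel_left] at this
    exact Nat.eq_one_of_dvd_one hd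
  have key := h.pow_of_coprime ((L + 1) / 2) hm
  convert key using 1
  rw [← Complex.exp_nat_mul]
  have hm2 : (((L + 1) / 2 : ℕ) : ℂ) * 2 = (L : ℂ) + 1 := by
    rw [mul_comm, ← Nat.cast_ofNat, ← Nat.cast_mul, h2]
    push_cast; ring
  have heq : (((L + 1) / 2 : ℕ) : ℂ) * (2 * Real.pi * Complex.I / L)
      = Real.pi * Complex.I + Real.pi * Complex.I / L := by
    calc (((L + 1) / 2 : ℕ) : ℂ) * (2 * Real.pi * Complex.I / L)
        = ((((L + 1) / 2 : ℕ) : ℂ) * 2) * (Real.pi * Complex.I) / L := by ring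
      _ = ((L : ℂ) + 1) * (Real.pi * Complex.I) / L := by rw [hm2]
      _ = (L : ℂ) * (Real.pi * Complex.I) / L + Real.pi * Complex.I / L := by ring
      _ = Real.pi * Complex.I + Real.pi * Complex.I / L := by
          congr 1
          rw [mul_comm]
          exact mul_div_cancel_right₀ _ hLC
  rw [heq, Complex.exp_add, Complex.exp_pi_mul_I]
  ring

/-- For L odd, the matrix U_G = (1/√L) Σ_{u,v} τ^{β⁻¹(αv² - 2uv + δu²)} |u⟩⟨v|,
with τ = -exp(iπ/L), G = ((α,β),(γ,δ)) ∈ SL(2,ℤ_L) and β invertible mod L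
(with inverse βi), is unitary.  Exponents in ℤ_L are lifted to ℕ via `ZMod.val`. -/
theorem metaplectic_matrix_unitary (L : ℕ) [NeZero L] (hodd : Odd L)
    (α β γ δ βi : ZMod L) (hdet : α * δ - β * γ = 1) (hβ : β * βi = 1) :
    (fun u v : Fin L =>
        ((1 / Real.sqrt L : ℝ) : ℂ) *
          (-Complex.exp (Real.pi * Complex.I / L)) ^
            (βi * (α * (v.val : ZMod L) ^ 2 - 2 * (u.val : ZMod L) * (v.val : ZMod L)
              + δ * (u.val : ZMod L) ^ 2)).val
      : Matrix (Fin L) (Fin L) ℂ) ∈ Matrix.unitaryGroup (Fin L) ℂ := by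
  have hL : L ≠ 0 := NeZero.ne L
  have hL0 : 0 < L := Nat.pos_of_ne_zero hL
  set τ : ℂ := -Complex.exp (Real.pi * Complex.I / L) with hτdef
  have hprim : IsPrimitiveRoot τ L := tau_primitive L hodd
  have hτL : τ ^ L = 1 := hprim.pow_eq_one
  have hkey : ∀ a : ℕ, τ ^ a = τ ^ (a % L) := by
    intro a
    conv_lhs => rw [← Nat.div_add_mod a L]
    rw [pow_add, pow_mul, hτL, one_pow, one_mul]
  set g : ZMod L → ℂ := fun x => τ ^ x.val with hgdef
  have hg0 : g 0 = 1 := by simp [hgdef]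
  have hg_add : ∀ x y : ZMod L, g (x + y) = g x * g y := by
    intro x y
    simp only [hgdef]
    rw [ZMod.val_add, ← hkey, pow_add]
  have hg_star : ∀ x : ZMod L, star (g x) = g (-x) := by
    intro x
    have h1 : g x * g (-x) = 1 := by
      rw [← hg_add]; simp [hg0]
    have habs : ‖τ‖ = 1 := by
      rw [hτdef]
      rw [norm_neg, Complex.norm_exp]
      have : (Real.pi * Complex.I / L).re = 0 := by
        simp [Complex.div_re]
      rw [this, Real.exp_zero]
    have habsg : ‖g x‖ = 1 := by
      simp only [hgdef, norm_pow, habs, one_pow]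
    have h2 : star (g x) * g x = 1 := by
      rw [Complex.star_def, mul_comm, Complex.mul_conj, Complex.normSq_eq_norm_sq, habsg]
      norm_num
    calc star (g x) = star (g x) * (g x * g (-x)) := by rw [h1, mul_one]
      _ = (star (g x) * g x) * g (-x) := by ring
      _ = g (-x) := by rw [h2, one_mul]
  have hg_pow : ∀ (x : ZMod L) (n : ℕ), g (x * (n : ZMod L)) = g x ^ n := by
    intro x n
    simp only [hgdef, ← pow_mul]
    rw [hkey (x.val * n)]
    congr 1
    rw [ZMod.val_mul, ZMod.val_natCast]
    exact Nat.ModEq.mul_left x.val (Nat.mod_modEq n L)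
  refine Matrix.mem_unitaryGroup_iff.mpr ?_
  ext u w
  erw [Matrix.mul_apply]
  conv_lhs => enter [2, j]; erw [Matrix.star_apply]
  simp only [star_mul']
  set c : ℂ := ((1 / Real.sqrt L : ℝ) : ℂ) with hcdef
  have hcstar : star c = c := by
    rw [hcdef, RCLike.star_def, Complex.conj_ofReal]
  have hc2 : c * c = 1 / (L : ℂ) := by
    rw [hcdef, ← Complex.ofReal_mul]
    have : (1 / Real.sqrt L) * (1 / Real.sqrt L) = 1 / L := by
      rw [div_mul_div_comm, one_mul, Real.mul_self_sqrt (Nat.cast_nonneg L)]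
    rw [this]
    push_cast
    ring
  set cc : ZMod L := 2 * βi * ((w.val : ZMod L) - (u.val : ZMod L)) with hccdef
  set d : ZMod L := βi * δ * ((u.val : ZMod L) ^ 2 - (w.val : ZMod L) ^ 2) with hddef
  have hterm : ∀ v : Fin L,
      c * τ ^ (βi * (α * (v.val : ZMod L) ^ 2 - 2 * (u.val : ZMod L) * (v.val : ZMod L)
              + δ * (u.val : ZMod L) ^ 2)).val *
        (star c * star (τ ^ (βi * (α * (v.val : ZMod L) ^ 2
              - 2 * (w.val : ZMod L) * (v.val : ZMod L)
              + δ * (w.val : ZMod L) ^ 2)).val))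
      = (c * c) * (g d * (g cc) ^ v.val) := by
    intro v
    rw [hcstar]
    set Eu : ZMod L := βi * (α * (v.val : ZMod L) ^ 2
        - 2 * (u.val : ZMod L) * (v.val : ZMod L) + δ * (u.val : ZMod L) ^ 2) with hEu
    set Ew : ZMod L := βi * (α * (v.val : ZMod L) ^ 2
        - 2 * (w.val : ZMod L) * (v.val : ZMod L) + δ * (w.val : ZMod L) ^ 2) with hEw
    have h1 : (star (τ ^ Ew.val) : ℂ) = g (-Ew) := hg_star Ew
    have h2 : (τ ^ Eu.val : ℂ) = g Eu := rfl
    rw [h1, h2]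
    have hsplit : Eu + -Ew = cc * ((v.val : ℕ) : ZMod L) + d := by
      rw [hEu, hEw, hccdef, hddef]
      ring
    have h3 : g Eu * g (-Ew) = g d * g cc ^ v.val := by
      rw [← hg_add, hsplit, hg_add, hg_pow, mul_comm]
    calc c * g Eu * (c * g (-Ew)) = (c * c) * (g Eu * g (-Ew)) := by ring
      _ = (c * c) * (g d * g cc ^ v.val) := by rw [h3]
  rw [Finset.sum_congr rfl (fun v _ => hterm v)]
  rw [← Finset.mul_sum, ← Finset.mul_sum]
  rw [Fin.sum_univ_eq_sum_range (fun i => (g cc) ^ i) L]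
  by_cases huw : u = w
  · subst huw
    have hcc0 : cc = 0 := by rw [hccdef]; ring
    have hd0 : d = 0 := by rw [hddef]; ring
    rw [hcc0, hd0, hg0]
    simp only [one_pow, Finset.sum_const, Finset.card_range, nsmul_eq_mul, mul_one]
    rw [hc2, Matrix.one_apply_eq]
    have hLC : (L : ℂ) ≠ 0 := Nat.cast_ne_zero.mpr hL
    field_simp
  · have hccne : cc ≠ 0 := by
      intro h0
      apply huw
      have h2L : (2 : ZMod L) * (((L + 1) / 2 : ℕ) : ZMod L) = 1 := by
        have h2 : 2 * ((L + 1) / 2) = L + 1 := by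
          obtain ⟨k, hk⟩ := hodd; omega
        have : ((2 * ((L + 1) / 2) : ℕ) : ZMod L) = ((L + 1 : ℕ) : ZMod L) := by
          rw [h2]
        push_cast at this
        rw [ZMod.natCast_self] at this
        simpa using this
      have hsub : (w.val : ZMod L) - (u.val : ZMod L) = 0 := by
        have h4 := congrArg (fun t => (((L + 1) / 2 : ℕ) : ZMod L) * β * t) h0
        simp only [mul_zero] at h4
        calc (w.val : ZMod L) - (u.val : ZMod L)
            = ((2 : ZMod L) * (((L + 1) / 2 : ℕ) : ZMod L)) * (β * βi)
              * ((w.val : ZMod L) - (u.val : ZMod L)) := by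
              rw [h2L, hβ]; ring
          _ = (((L + 1) / 2 : ℕ) : ZMod L) * β
              * (2 * βi * ((w.val : ZMod L) - (u.val : ZMod L))) := by ring
          _ = 0 := h4
      have hval : (w.val : ZMod L) = (u.val : ZMod L) := by
        rwa [sub_eq_zero] at hsub
      have : w.val = u.val := by
        have h1 := congrArg ZMod.val hval
        rwa [ZMod.val_cast_of_lt w.isLt, ZMod.val_cast_of_lt u.isLt] at h1
      exact (Fin.ext this).symm
    have hgcc1 : g cc ≠ 1 := by
      intro h1
      apply hccne
      have hdvd : L ∣ cc.val := hprim.dvd_of_pow_eq_one cc.val h1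
      have hlt : cc.val < L := ZMod.val_lt cc
      have hz : cc.val = 0 := Nat.eq_zero_of_dvd_of_lt hdvd hlt
      exact (ZMod.val_eq_zero cc).mp hz
    have hgeom : ∑ i ∈ Finset.range L, (g cc) ^ i = 0 := by
      rw [geom_sum_eq hgcc1]
      have : (g cc) ^ L = 1 := by
        show (τ ^ cc.val) ^ L = 1
        rw [← pow_mul, mul_comm, pow_mul, hτL, one_pow]
      rw [this]
      simp
    rw [hgeom, mul_zero, mul_zero, Matrix.one_apply_ne huw]
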